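/- Assume the linear model and hard-thresholding setup of the context, with n ≥ 2 and all hypotheses (i)–(v) ensuring model selection consistency, and additionally the noise bound ‖n⁻¹X₀ᵀε‖_∞ ≤ c₂′√((log n)/n) for some c₂′ > 0, where X₀ is the submatrix of X consisting of the columns with indices in supp(β₀). Then any global minimizer β̂ of Q over S_{M/2} = {β ∈ ℝᵖ : ‖β‖₀ < M/2} satisfies, for every q ∈ [1, 2], the estimation bound ‖β̂ − β₀‖_q ≤ 2 c⁻² c₂′ s^{1/q} √((log n)/n), and moreover ‖β̂ − β₀‖_∞ ≤ 2 c⁻² c₂′ √(s (log n)/n). -/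

import Mathlib

open scoped Classical

/-- The hard-thresholding penalty `p_{H,λ}(t) = ½(λ² − ((λ−t)₊)²)`. -/
noncomputable def hardPenalty (lam t : ℝ) : ℝ := (lam ^ 2 - (max (lam - t) 0) ^ 2) / 2

/-- The number of nonzero components `‖β‖₀`. -/
noncomputable def l0norm {p : ℕ} (β : Fin p → ℝ) : ℕ :=
  (Finset.univ.filter fun j => β j ≠ 0).card

/-- The hard-thresholding penalized least squares objective
`Q(β) = (2n)⁻¹‖y − Xβ‖₂² + Σ_j p_{H,λ}(|β_j|)`. -/
noncomputable def hardObj {n p : ℕ} (y : Fin n → ℝ) (X : Matrix (Fin n) (Fin p) ℝ)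
    (lam : ℝ) (β : Fin p → ℝ) : ℝ :=
  (2 * (n : ℝ))⁻¹ * ∑ i, (y i - ∑ k, X i k * β k) ^ 2 + ∑ k, hardPenalty lam |β k|

section Aux

open Finset

variable {n p : ℕ}

lemma hp_le (lam t : ℝ) : hardPenalty lam t ≤ lam ^ 2 / 2 := by
  unfold hardPenalty
  nlinarith [sq_nonneg (max (lam - t) 0)]

lemma hp_big {lam t : ℝ} (h : lam ≤ t) : hardPenalty lam t = lam ^ 2 / 2 := by
  unfold hardPenalty
  rw [max_eq_right (by linarith : lam - t ≤ 0)]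
  ring

lemma hp_small {lam t : ℝ} (h0 : 0 ≤ t) (h : t ≤ lam) :
    hardPenalty lam t = lam * t - t ^ 2 / 2 := by
  unfold hardPenalty
  rw [max_eq_left (by linarith : (0:ℝ) ≤ lam - t)]
  ring

lemma hp_zero {lam : ℝ} (h : 0 ≤ lam) : hardPenalty lam 0 = 0 := by
  rw [hp_small le_rfl h]; ring

lemma l0_le_of_imp {f g : Fin p → ℝ} (h : ∀ j, f j ≠ 0 → g j ≠ 0) : l0norm f ≤ l0norm g := by
  apply Finset.card_le_card
  intro j hj
  simp only [Finset.mem_filter, Finset.mem_univ, true_and] at *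
  exact h j hj

lemma l0_update_le {f : Fin p → ℝ} {j : Fin p} (hj : f j ≠ 0) (z : ℝ) :
    l0norm (Function.update f j z) ≤ l0norm f := by
  apply l0_le_of_imp
  intro k hk
  rcases eq_or_ne k j with rfl | hkj
  · exact hj
  · rwa [Function.update_of_ne hkj] at hk

lemma l0_update_zero_lt {f : Fin p → ℝ} {j : Fin p} (hj : f j ≠ 0) :
    l0norm (Function.update f j 0) < l0norm f := by
  unfold l0norm
  have hsub : (Finset.univ.filter fun k => Function.update f j 0 k ≠ 0)
      ⊆ (Finset.univ.filter fun k => f k ≠ 0).erase j := by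
    intro k hk
    simp only [Finset.mem_filter, Finset.mem_univ, true_and] at hk
    rcases eq_or_ne k j with rfl | hkj
    · rw [Function.update_self] at hk; exact absurd rfl hk
    · refine Finset.mem_erase.2 ⟨hkj, ?_⟩
      simp only [Finset.mem_filter, Finset.mem_univ, true_and]
      rwa [Function.update_of_ne hkj] at hk
  calc (Finset.univ.filter fun k => Function.update f j 0 k ≠ 0).card
      ≤ ((Finset.univ.filter fun k => f k ≠ 0).erase j).card := Finset.card_le_card hsub
    _ < (Finset.univ.filter fun k => f k ≠ 0).card :=
        Finset.card_erase_lt_of_mem (by simp [hj])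

lemma l0_sub_le (f g : Fin p → ℝ) : l0norm (fun j => f j - g j) ≤ l0norm f + l0norm g := by
  unfold l0norm
  have hsub : (Finset.univ.filter fun j => f j - g j ≠ 0)
      ⊆ (Finset.univ.filter fun j => f j ≠ 0) ∪ (Finset.univ.filter fun j => g j ≠ 0) := by
    intro j hj
    simp only [Finset.mem_filter, Finset.mem_univ, true_and, Finset.mem_union] at *
    by_contra hcon
    push_neg at hcon
    rw [hcon.1, hcon.2, sub_zero] at hj
    exact hj rfl
  exact le_trans (Finset.card_le_card hsub) (Finset.card_union_le _ _)

lemma sum_pair {j k : Fin p} (hjk : j ≠ k) (f : Fin p → ℝ)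
    (h : ∀ l, l ≠ j → l ≠ k → f l = 0) : ∑ l, f l = f j + f k := by
  rw [← Finset.add_sum_erase _ f (Finset.mem_univ j)]
  congr 1
  rw [← Finset.add_sum_erase _ f (Finset.mem_erase.2 ⟨(Ne.symm hjk), Finset.mem_univ k⟩)]
  have : ∑ l ∈ (Finset.univ.erase j).erase k, f l = 0 := by
    apply Finset.sum_eq_zero
    intro l hl
    simp only [Finset.mem_erase] at hl
    exact h l hl.2.1 hl.1
  rw [this, add_zero]

lemma obj_diff (hn0 : (n:ℝ) ≠ 0) (y : Fin n → ℝ) (X : Matrix (Fin n) (Fin p) ℝ) (lam : ℝ)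
    (βh β : Fin p → ℝ) :
    hardObj y X lam β - hardObj y X lam βh =
      (2*(n:ℝ))⁻¹ * (∑ i, (∑ k, X i k * (β k - βh k))^2)
      - (n:ℝ)⁻¹ * (∑ i, (y i - ∑ k, X i k * βh k) * (∑ k, X i k * (β k - βh k)))
      + ∑ k, (hardPenalty lam |β k| - hardPenalty lam |βh k|) := by
  unfold hardObj
  have h1 : ∀ i : Fin n, (y i - ∑ k, X i k * β k)^2
      = (y i - ∑ k, X i k * βh k)^2
        - 2*((y i - ∑ k, X i k * βh k) * (∑ k, X i k * (β k - βh k)))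
        + (∑ k, X i k * (β k - βh k))^2 := by
    intro i
    have h2 : ∑ k, X i k * β k = ∑ k, X i k * βh k + ∑ k, X i k * (β k - βh k) := by
      rw [← Finset.sum_add_distrib]
      exact Finset.sum_congr rfl (fun k _ => by ring)
    rw [h2]; ring
  rw [Finset.sum_congr rfl (fun i _ => h1 i), Finset.sum_add_distrib, Finset.sum_sub_distrib,
    ← Finset.mul_sum, Finset.sum_sub_distrib]
  field_simp
  ring

lemma upd_diff (hn0 : (n:ℝ) ≠ 0) (y : Fin n → ℝ) (X : Matrix (Fin n) (Fin p) ℝ) (lam : ℝ)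
    (βh : Fin p → ℝ) (j : Fin p) (hcolj : ∑ i, (X i j)^2 = (n:ℝ)) (z : ℝ) :
    hardObj y X lam (Function.update βh j z) - hardObj y X lam βh =
      (z - βh j)^2/2
      - (z - βh j) * ((n:ℝ)⁻¹ * ∑ i, X i j * (y i - ∑ k, X i k * βh k))
      + (hardPenalty lam |z| - hardPenalty lam |βh j|) := by
  rw [obj_diff hn0]
  have hd : ∀ i, (∑ k, X i k * (Function.update βh j z k - βh k)) = X i j * (z - βh j) := by
    intro i
    rw [Finset.sum_eq_single j
      (fun k _ hkj => by rw [Function.update_of_ne hkj, sub_self, mul_zero])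
      (fun h => absurd (Finset.mem_univ j) h), Function.update_self]
  have e1 : ∑ i, (∑ k, X i k * (Function.update βh j z k - βh k))^2 = (z - βh j)^2 * (n:ℝ) := by
    simp only [hd]
    simp_rw [mul_pow]
    rw [← Finset.sum_mul, hcolj]; ring
  have e2 : ∑ i, (y i - ∑ k, X i k * βh k) * (∑ k, X i k * (Function.update βh j z k - βh k))
      = (z - βh j) * ∑ i, X i j * (y i - ∑ k, X i k * βh k) := by
    simp only [hd]
    rw [Finset.mul_sum]
    exact Finset.sum_congr rfl (fun i _ => by ring)
  have e3 : ∑ k, (hardPenalty lam |Function.update βh j z k| - hardPenalty lam |βh k|)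
      = hardPenalty lam |z| - hardPenalty lam |βh j| := by
    rw [Finset.sum_eq_single j
      (fun k _ hkj => by rw [Function.update_of_ne hkj, sub_self])
      (fun h => absurd (Finset.mem_univ j) h), Function.update_self]
  rw [e1, e2, e3]
  field_simp

lemma upd2_diff (hn0 : (n:ℝ) ≠ 0) (y : Fin n → ℝ) (X : Matrix (Fin n) (Fin p) ℝ)
    (lam : ℝ) (βh : Fin p → ℝ) {j k : Fin p} (hjk : j ≠ k)
    (hcolj : ∑ i, (X i j)^2 = (n:ℝ)) (hcolk : ∑ i, (X i k)^2 = (n:ℝ)) (u w : ℝ) :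
    hardObj y X lam (Function.update (Function.update βh j (βh j + u)) k (βh k + w)) -
      hardObj y X lam βh =
      u^2/2 + w^2/2 + u*w*((n:ℝ)⁻¹ * ∑ i, X i j * X i k)
      - u * ((n:ℝ)⁻¹ * ∑ i, X i j * (y i - ∑ l, X i l * βh l))
      - w * ((n:ℝ)⁻¹ * ∑ i, X i k * (y i - ∑ l, X i l * βh l))
      + (hardPenalty lam |βh j + u| - hardPenalty lam |βh j|)
      + (hardPenalty lam |βh k + w| - hardPenalty lam |βh k|) := by
  rw [obj_diff hn0]
  set β2 := Function.update (Function.update βh j (βh j + u)) k (βh k + w) with hβ2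
  have hb2j : β2 j = βh j + u := by
    rw [hβ2, Function.update_of_ne hjk, Function.update_self]
  have hb2k : β2 k = βh k + w := by rw [hβ2, Function.update_self]
  have hb2l : ∀ l, l ≠ j → l ≠ k → β2 l = βh l := fun l hlj hlk => by
    rw [hβ2, Function.update_of_ne hlk, Function.update_of_ne hlj]
  have hd : ∀ i, (∑ l, X i l * (β2 l - βh l)) = X i j * u + X i k * w := by
    intro i
    rw [sum_pair hjk (fun l => X i l * (β2 l - βh l))
      (fun l hlj hlk => show X i l * (β2 l - βh l) = 0 by rw [hb2l l hlj hlk, sub_self, mul_zero])]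
    rw [hb2j, hb2k]; ring
  have e1 : ∑ i, (∑ l, X i l * (β2 l - βh l))^2
      = u^2*(n:ℝ) + w^2*(n:ℝ) + 2*u*w*(∑ i, X i j * X i k) := by
    simp only [hd]
    have hterm : ∀ i : Fin n, (X i j * u + X i k * w)^2
        = (X i j)^2*u^2 + (X i k)^2*w^2 + (2*u*w)*(X i j * X i k) := fun i => by ring
    simp only [hterm]
    rw [Finset.sum_add_distrib, Finset.sum_add_distrib, ← Finset.sum_mul, ← Finset.sum_mul,
      ← Finset.mul_sum, hcolj, hcolk]
    ring
  have e2 : ∑ i, (y i - ∑ l, X i l * βh l) * (∑ l, X i l * (β2 l - βh l))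
      = u * (∑ i, X i j * (y i - ∑ l, X i l * βh l))
        + w * (∑ i, X i k * (y i - ∑ l, X i l * βh l)) := by
    simp only [hd]
    have hterm : ∀ i : Fin n, (y i - ∑ l, X i l * βh l) * (X i j * u + X i k * w)
        = u * (X i j * (y i - ∑ l, X i l * βh l)) + w * (X i k * (y i - ∑ l, X i l * βh l)) :=
      fun i => by ring
    simp only [hterm]
    rw [Finset.sum_add_distrib, ← Finset.mul_sum, ← Finset.mul_sum]
  have e3 : ∑ l, (hardPenalty lam |β2 l| - hardPenalty lam |βh l|)
      = (hardPenalty lam |βh j + u| - hardPenalty lam |βh j|)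
        + (hardPenalty lam |βh k + w| - hardPenalty lam |βh k|) := by
    rw [sum_pair hjk (fun l => hardPenalty lam |β2 l| - hardPenalty lam |βh l|)
      (fun l hlj hlk => show hardPenalty lam |β2 l| - hardPenalty lam |βh l| = 0 by rw [hb2l l hlj hlk, sub_self])]
    rw [hb2j, hb2k]
  rw [e1, e2, e3]
  field_simp
  ring

lemma se_sq (X : Matrix (Fin n) (Fin p) ℝ) {c M : ℝ}
    (hSE : ∀ δ : Fin p → ℝ, (l0norm δ : ℝ) < M →
      c * Real.sqrt (∑ j, (δ j) ^ 2) ≤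
        (Real.sqrt n)⁻¹ * Real.sqrt (∑ i, (∑ k, X i k * δ k) ^ 2))
    (δ : Fin p → ℝ) (hδ : (l0norm δ : ℝ) < M) (hc : 0 ≤ c) :
    c^2 * ∑ j, (δ j)^2 ≤ (n:ℝ)⁻¹ * ∑ i, (∑ k, X i k * δ k)^2 := by
  have h := hSE δ hδ
  have hD : (0:ℝ) ≤ ∑ j, (δ j)^2 := Finset.sum_nonneg fun _ _ => sq_nonneg _
  have hT : (0:ℝ) ≤ ∑ i, (∑ k, X i k * δ k)^2 := Finset.sum_nonneg fun _ _ => sq_nonneg _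
  have h2 := pow_le_pow_left₀ (by positivity) h 2
  rw [mul_pow, mul_pow, Real.sq_sqrt hD, Real.sq_sqrt hT, inv_pow,
    Real.sq_sqrt (by positivity : (0:ℝ) ≤ (n:ℝ))] at h2
  exact h2

set_option maxHeartbeats 4000000 in
lemma main_claim (hn : 2 ≤ n) (hp' : 2 ≤ max n p)
    (X : Matrix (Fin n) (Fin p) ℝ) (hcols : ∀ j, ∑ i, (X i j) ^ 2 = (n : ℝ))
    (β₀ : Fin p → ℝ) (ε y : Fin n → ℝ)
    (hy : ∀ i, y i = (∑ k, X i k * β₀ k) + ε i)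
    (c c₂ M b₀ lam : ℝ) (hc : 0 < c) (hc₂ : 0 < c₂)
    (hSE : ∀ δ : Fin p → ℝ, (l0norm δ : ℝ) < M →
      c * Real.sqrt (∑ j, (δ j) ^ 2) ≤
        (Real.sqrt n)⁻¹ * Real.sqrt (∑ i, (∑ k, X i k * δ k) ^ 2))
    (hs : (l0norm β₀ : ℝ) < M / 2)
    (hnoise : ∀ j, |(n : ℝ)⁻¹ * ∑ i, X i j * ε i| ≤
      c₂ * Real.sqrt (Real.log (max n p) / n))
    (hb₀ : ∀ j, β₀ j ≠ 0 → b₀ ≤ |β₀ j|)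
    (hb₀_large : b₀ > max (4 / c) 1 * c⁻¹ * c₂ *
      Real.sqrt ((2 * (l0norm β₀ : ℝ) + 1) * Real.log (max n p) / n))
    (hlam_low : c⁻¹ * c₂ *
      Real.sqrt ((2 * (l0norm β₀ : ℝ) + 1) * Real.log (max n p) / n) < lam)
    (hlam_high : lam < b₀ * min 1 (Real.sqrt (c ^ 2 / 2))) :
    ∀ N : ℕ, ∀ βh : Fin p → ℝ, l0norm βh = N → (l0norm βh : ℝ) < M / 2 →
      (∀ β : Fin p → ℝ, (l0norm β : ℝ) < M / 2 → hardObj y X lam βh ≤ hardObj y X lam β) →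
      (∀ j, β₀ j ≠ 0 → lam ≤ |βh j|) ∧ (∀ j, β₀ j = 0 → βh j = 0) := by
  -- shared constants and facts
  have hnR : (0:ℝ) < n := by exact_mod_cast (by omega : 0 < n)
  have hn0 : (n:ℝ) ≠ 0 := ne_of_gt hnR
  have hmnp : (1:ℝ) < max (n:ℝ) (p:ℝ) := by
    have h2 : ((2:ℕ):ℝ) ≤ ((max n p : ℕ):ℝ) := Nat.cast_le.2 hp'
    push_cast at h2
    linarith
  have hlogp : 0 < Real.log (max n p) := Real.log_pos hmnp
  set S : ℝ := (l0norm β₀ : ℝ) with hSdef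
  have hS0 : 0 ≤ S := Nat.cast_nonneg _
  set w : ℝ := c₂ * Real.sqrt (Real.log (max n p) / n) with hwdef
  have hw0 : 0 < w := mul_pos hc₂ (Real.sqrt_pos.2 (by positivity))
  set σ : ℝ := Real.sqrt (2 * S + 1) with hσdef
  have hsq : Real.sqrt ((2 * S + 1) * Real.log (max n p) / n)
      = σ * Real.sqrt (Real.log (max n p) / n) := by
    rw [hσdef, mul_div_assoc, Real.sqrt_mul (by linarith : (0:ℝ) ≤ 2 * S + 1)]
  have hσ1 : 1 ≤ σ := by
    rw [hσdef]
    have h := Real.sqrt_le_sqrt (show (1:ℝ) ≤ 2*S+1 by linarith)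
    rwa [Real.sqrt_one] at h
  have hσsq : σ^2 = 2 * S + 1 := Real.sq_sqrt (by linarith)
  have hσS : σ ≤ S + 1 := by
    rw [hσdef]
    have h : Real.sqrt (2 * S + 1) ≤ Real.sqrt ((S+1)^2) := Real.sqrt_le_sqrt (by nlinarith)
    rwa [Real.sqrt_sq (by linarith)] at h
  rw [hsq] at hlam_low hb₀_large
  have hclam : σ * w < c * lam := by
    have h1 := mul_lt_mul_of_pos_left hlam_low hc
    have h2 : c * (c⁻¹ * c₂ * (σ * Real.sqrt (Real.log (max n p) / n))) = σ * w := by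
      rw [hwdef]; field_simp
    linarith only [h1, h2.symm.le, h2.le]
  have hlam0 : 0 < lam := lt_of_le_of_lt (by positivity) hlam_low
  have hwclam : w < c * lam := by nlinarith only [hclam, hσ1, hw0]
  have hw2 : w^2 < c^2 * lam^2 := by nlinarith only [hwclam, hw0, hlam0, hc]
  have hb₀pos : 0 < b₀ := by
    refine lt_trans ?_ hb₀_large
    have h1 : (0:ℝ) < c⁻¹ * c₂ * (σ * Real.sqrt (Real.log (max n p) / n)) := by
      rw [hσdef]; positivity
    have h2 : (1:ℝ) ≤ max (4/c) 1 := le_max_right _ _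
    nlinarith only [h1, h2]
  have hblam : lam < b₀ := by
    have h := mul_le_mul_of_nonneg_left (min_le_left 1 (Real.sqrt (c^2/2))) hb₀pos.le
    rw [mul_one] at h
    linarith only [h, hlam_high]
  have hlam2 : 2 * lam^2 < c^2 * b₀^2 := by
    have h2 : lam < b₀ * Real.sqrt (c^2/2) :=
      lt_of_lt_of_le hlam_high (mul_le_mul_of_nonneg_left (min_le_right _ _) hb₀pos.le)
    have h3 : (b₀ * Real.sqrt (c^2/2))^2 = b₀^2 * (c^2/2) := by
      rw [mul_pow, Real.sq_sqrt (by positivity)]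
    have h4 := mul_self_lt_mul_self hlam0.le h2
    nlinarith only [h3, h4]
  have hb4 : 4 * (σ * w) < c^2 * b₀ := by
    have h1 : 4/c * c⁻¹ * (σ * w) ≤ max (4/c) 1 * c⁻¹ * (σ * w) := by
      apply mul_le_mul_of_nonneg_right _ (by nlinarith only [hσ1, hw0] : (0:ℝ) ≤ σ * w)
      exact mul_le_mul_of_nonneg_right (le_max_left _ _) (by positivity)
    have hA : max (4/c) 1 * c⁻¹ * c₂ * (σ * Real.sqrt (Real.log (max n p) / n))
        = max (4/c) 1 * c⁻¹ * (σ * w) := by rw [hwdef]; ring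
    rw [hA] at hb₀_large
    have h2 : 4/c * c⁻¹ * (σ * w) < b₀ := lt_of_le_of_lt h1 hb₀_large
    have h3 : c^2 * (4/c * c⁻¹ * (σ * w)) = 4 * (σ * w) := by field_simp
    nlinarith only [mul_lt_mul_of_pos_left h2 (by positivity : (0:ℝ) < c^2), h3]
  have hyε : ∀ i, y i - ∑ k, X i k * β₀ k = ε i := fun i => by rw [hy i]; ring
  clear_value S w σ
  clear hsq hlam_low hb₀_large hlam_high
  -- main induction
  intro N
  induction N using Nat.strong_induction_on with
  | _ N IH =>
  intro βh hN hmem hmin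
  by_cases hedge : ∃ j, βh j ≠ 0 ∧ |βh j| < lam
  · -- Case 2: an edge coordinate exists; derive a contradiction
    exfalso
    obtain ⟨j, hbj, htj⟩ := hedge
    have ht0 : 0 < |βh j| := abs_pos.2 hbj
    have hsqb : (βh j)^2 = |βh j|^2 := (sq_abs _).symm
    have hud : ∀ z, hardObj y X lam (Function.update βh j z) - hardObj y X lam βh =
        (z - βh j)^2/2
        - (z - βh j) * ((n:ℝ)⁻¹ * ∑ i, X i j * (y i - ∑ k, X i k * βh k))
        + (hardPenalty lam |z| - hardPenalty lam |βh j|) :=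
      fun z => upd_diff hn0 y X lam βh j (hcols j) z
    set v : ℝ := (n:ℝ)⁻¹ * ∑ i, X i j * (y i - ∑ k, X i k * βh k) with hvdef
    -- comparison with z = 0
    have hmem0 : (l0norm (Function.update βh j 0) : ℝ) < M/2 :=
      lt_of_le_of_lt (by exact_mod_cast l0_update_le hbj 0) hmem
    have h0 : (0:ℝ) ≤ (0 - βh j)^2/2 - (0 - βh j) * v
        + (hardPenalty lam |(0:ℝ)| - hardPenalty lam |βh j|) := by
      linarith only [hmin (Function.update βh j 0) hmem0, hud 0]
    rw [abs_zero, hp_zero hlam0.le, hp_small (abs_nonneg (βh j)) htj.le] at h0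
    have ht1 : lam * |βh j| - |βh j|^2 ≤ βh j * v := by nlinarith only [h0, hsqb]
    -- comparison with z = βh j + v
    have hmema : (l0norm (Function.update βh j (βh j + v)) : ℝ) < M/2 :=
      lt_of_le_of_lt (by exact_mod_cast l0_update_le hbj (βh j + v)) hmem
    have ha : (0:ℝ) ≤ (βh j + v - βh j)^2/2 - (βh j + v - βh j) * v
        + (hardPenalty lam |βh j + v| - hardPenalty lam |βh j|) := by
      linarith only [hmin (Function.update βh j (βh j + v)) hmema, hud (βh j + v)]
    rw [hp_small (abs_nonneg (βh j)) htj.le] at ha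
    have hv2 : v^2 ≤ (lam - |βh j|)^2 := by
      nlinarith only [ha, hp_le lam |βh j + v|]
    have hvle : |v| ≤ lam - |βh j| := by
      have h := Real.sqrt_le_sqrt hv2
      rwa [Real.sqrt_sq_eq_abs, Real.sqrt_sq_eq_abs,
        abs_of_nonneg (by linarith only [htj] : (0:ℝ) ≤ lam - |βh j|)] at h
    have ht2 : βh j * v ≤ lam * |βh j| - |βh j|^2 := by
      have h1 : βh j * v ≤ |βh j| * |v| := by
        calc βh j * v ≤ |βh j * v| := le_abs_self _
        _ = |βh j| * |v| := abs_mul _ _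
      have h2 : |βh j| * |v| ≤ |βh j| * (lam - |βh j|) :=
        mul_le_mul_of_nonneg_left hvle (abs_nonneg _)
      nlinarith only [h1, h2]
    have hbv : βh j * v = lam * |βh j| - |βh j|^2 := le_antisymm ht2 ht1
    have hE1 : |βh j| * v = βh j * (lam - |βh j|) := by
      have h2 : βh j * (|βh j| * v - βh j * (lam - |βh j|)) = 0 := by
        linear_combination |βh j| * hbv + (|βh j| - lam) * hsqb
      rcases mul_eq_zero.1 h2 with h | h
      · exact absurd h hbj
      · linarith only [h]
    -- stationarity at large coordinates
    have hstat : ∀ k, lam ≤ |βh k| →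
        (n:ℝ)⁻¹ * ∑ i, X i k * (y i - ∑ l, X i l * βh l) = 0 := by
      intro k hk
      by_contra hvk
      set vk : ℝ := (n:ℝ)⁻¹ * ∑ i, X i k * (y i - ∑ l, X i l * βh l) with hvkdef
      have hbk0 : βh k ≠ 0 := by
        intro h; rw [h, abs_zero] at hk; linarith only [hk, hlam0]
      have htk0 : 0 < |βh k| := lt_of_lt_of_le hlam0 hk
      have hvkabs : 0 < |vk| := abs_pos.2 hvk
      have hden : 0 < |βh k| + 2*|vk| := by linarith only [htk0, hvkabs]
      set d : ℝ := |βh k| / (|βh k| + 2*|vk|) with hddef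
      have hd0 : 0 < d := div_pos htk0 hden
      have hd1 : d ≤ 1 := by rw [hddef, div_le_one hden]; linarith only [hvkabs]
      have hmemk : (l0norm (Function.update βh k (βh k + vk*d)) : ℝ) < M/2 :=
        lt_of_le_of_lt (by exact_mod_cast l0_update_le hbk0 (βh k + vk*d)) hmem
      have hud_k := upd_diff hn0 y X lam βh k (hcols k) (βh k + vk*d)
      rw [← hvkdef] at hud_k
      have hcomp : (0:ℝ) ≤ (βh k + vk*d - βh k)^2/2 - (βh k + vk*d - βh k) * vk
          + (hardPenalty lam |βh k + vk*d| - hardPenalty lam |βh k|) := by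
        linarith only [hmin (Function.update βh k (βh k + vk*d)) hmemk, hud_k]
      rw [hp_big hk] at hcomp
      have hvk2 : |vk|^2 = vk^2 := sq_abs vk
      nlinarith only [hcomp, hp_le lam |βh k + vk*d|, hd0, hd1, hvkabs, hvk2,
        mul_pos (mul_pos hvkabs hvkabs) hd0]
    -- orthogonality with large coordinates
    have hrho : ∀ k, k ≠ j → lam ≤ |βh k| →
        (n:ℝ)⁻¹ * ∑ i, X i j * X i k = 0 := by
      intro k hkj hk
      by_contra hρne
      set ρ : ℝ := (n:ℝ)⁻¹ * ∑ i, X i j * X i k with hρdef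
      have hbk0 : βh k ≠ 0 := by
        intro h; rw [h, abs_zero] at hk; linarith only [hk, hlam0]
      have htk0 : 0 < |βh k| := lt_of_lt_of_le hlam0 hk
      have hρabs : 0 < |ρ| := abs_pos.2 hρne
      set u : ℝ := min (min (|βh j|/2) ((lam - |βh j|)/2)) (|βh k| / (2*|ρ|)) with hudef
      have hu0 : 0 < u := by
        rw [hudef]
        exact lt_min (lt_min (by linarith only [ht0]) (by linarith only [htj]))
          (div_pos htk0 (by linarith only [hρabs]))
      have hu1 : u ≤ |βh j|/2 := le_trans (min_le_left _ _) (min_le_left _ _)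
      have hu2 : u ≤ (lam - |βh j|)/2 := le_trans (min_le_left _ _) (min_le_right _ _)
      have hu3 : u ≤ |βh k|/(2*|ρ|) := min_le_right _ _
      have hquad := upd2_diff hn0 y X lam βh (Ne.symm hkj) (hcols j) (hcols k) u (-ρ*u)
      rw [← hvdef, ← hρdef, hstat k hk] at hquad
      have hmemjk : (l0norm (Function.update (Function.update βh j (βh j + u)) k
          (βh k + -ρ*u)) : ℝ) < M/2 := by
        have h1 : l0norm (Function.update (Function.update βh j (βh j + u)) k (βh k + -ρ*u))
            ≤ l0norm (Function.update βh j (βh j + u)) :=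
          l0_update_le (by rw [Function.update_of_ne hkj]; exact hbk0) _
        have h2 : l0norm (Function.update βh j (βh j + u)) ≤ l0norm βh := l0_update_le hbj _
        exact lt_of_le_of_lt (by exact_mod_cast le_trans h1 h2) hmem
      have hcomp : (0:ℝ) ≤ u^2/2 + (-ρ*u)^2/2 + u*(-ρ*u)*ρ - u*v - (-ρ*u) * 0
          + (hardPenalty lam |βh j + u| - hardPenalty lam |βh j|)
          + (hardPenalty lam |βh k + -ρ*u| - hardPenalty lam |βh k|) := by
        linarith only [hmin _ hmemjk, hquad]
      -- j-term cancellation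
      have hv : v = βh j * (lam - |βh j|) / |βh j| := by
        rw [eq_div_iff (ne_of_gt ht0)]; linarith only [hE1]
      have hble : |βh j + u| ≤ lam := by
        calc |βh j + u| ≤ |βh j| + |u| := abs_add_le _ _
        _ = |βh j| + u := by rw [abs_of_pos hu0]
        _ ≤ lam := by linarith only [hu2, htj]
      have habsju : |βh j + u| = (|βh j|^2 + βh j*u)/|βh j| := by
        rcases hbj.lt_or_gt with hneg | hpos
        · have habsb : |βh j| = -(βh j) := abs_of_neg hneg
          have hbu : βh j + u < 0 := by rw [habsb] at hu1; linarith only [hu1, hu0, hneg]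
          rw [abs_of_neg hbu, habsb, eq_div_iff (ne_of_gt (neg_pos.2 hneg))]; ring
        · have habsb : |βh j| = βh j := abs_of_pos hpos
          have hbu : 0 < βh j + u := by linarith only [hpos, hu0]
          rw [abs_of_pos hbu, habsb, eq_div_iff (ne_of_gt hpos)]; ring
      have hkey : -(u*v) + (hardPenalty lam |βh j + u| - hardPenalty lam |βh j|)
          = -u^2/2 := by
        rw [hp_small (abs_nonneg _) hble, hp_small (abs_nonneg _) htj.le, habsju, hv]
        have htne : |βh j| ≠ 0 := ne_of_gt ht0
        field_simp
        linear_combination (-u^2) * hsqb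
      have hpk : hardPenalty lam |βh k + -ρ*u| - hardPenalty lam |βh k| ≤ 0 := by
        rw [hp_big hk]; linarith only [hp_le lam |βh k + -ρ*u|]
      have hρ2 : |ρ|^2 = ρ^2 := sq_abs ρ
      nlinarith only [hcomp, hkey, hpk, mul_pos (mul_pos hρabs hρabs) (mul_pos hu0 hu0), hρ2]
    -- the zeroed vector is also a global minimizer
    have hQeq : hardObj y X lam (Function.update βh j 0) = hardObj y X lam βh := by
      have h := hud 0
      rw [abs_zero, hp_zero hlam0.le, hp_small (abs_nonneg (βh j)) htj.le] at h
      have h2 : (0 - βh j)^2/2 - (0 - βh j)*v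
          + (0 - (lam*|βh j| - |βh j|^2/2)) = 0 := by
        nlinarith only [hbv, hsqb]
      linarith only [h, h2]
    have hl0' : l0norm (Function.update βh j 0) < N := by
      rw [← hN]; exact l0_update_zero_lt hbj
    have hmem' : (l0norm (Function.update βh j 0) : ℝ) < M/2 :=
      lt_of_le_of_lt (by exact_mod_cast (l0_update_zero_lt hbj).le) hmem
    have hmin' : ∀ β, (l0norm β : ℝ) < M/2 →
        hardObj y X lam (Function.update βh j 0) ≤ hardObj y X lam β := by
      intro β hβ; rw [hQeq]; exact hmin β hβ
    obtain ⟨hIH1, hIH2⟩ := IH (l0norm (Function.update βh j 0)) hl0'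
      (Function.update βh j 0) rfl hmem' hmin'
    have hj0 : β₀ j = 0 := by
      by_contra h
      have h2 := hIH1 j h
      rw [Function.update_self, abs_zero] at h2
      linarith only [h2, hlam0]
    have hSk : ∀ k, β₀ k ≠ 0 → k ≠ j ∧ lam ≤ |βh k| := by
      intro k hk
      have hkj : k ≠ j := fun h => (h ▸ hk) hj0
      have h2 := hIH1 k hk
      rw [Function.update_of_ne hkj] at h2
      exact ⟨hkj, h2⟩
    have hoffk : ∀ k, β₀ k = 0 → k ≠ j → βh k = 0 := by
      intro k hk hkj
      have h2 := hIH2 k hk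
      rwa [Function.update_of_ne hkj] at h2
    -- compute v in terms of the noise
    have hcross : ∑ i, X i j * (∑ l, X i l * (βh l - β₀ l)) = (n:ℝ) * βh j := by
      have hswap2 : ∑ i, X i j * (∑ l, X i l * (βh l - β₀ l))
          = ∑ l, (βh l - β₀ l) * (∑ i, X i j * X i l) := by
        simp_rw [Finset.mul_sum]
        rw [Finset.sum_comm]
        refine Finset.sum_congr rfl fun l _ => Finset.sum_congr rfl fun i _ => by ring
      rw [hswap2, Finset.sum_eq_single j ?off (fun h => absurd (Finset.mem_univ j) h)]
      case off =>
        intro l _ hlj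
        by_cases hl : β₀ l = 0
        · rw [hoffk l hl hlj, hl]; ring
        · have h3 := hrho l hlj (hSk l hl).2
          have h4 : ∑ i, X i j * X i l = 0 := by
            rcases mul_eq_zero.1 h3 with h | h
            · exact absurd h (inv_ne_zero hn0)
            · exact h
          rw [h4, mul_zero]
      · rw [hj0, sub_zero]
        have h5 : ∑ i, X i j * X i j = (n:ℝ) := by
          rw [← hcols j]
          exact Finset.sum_congr rfl fun i _ => (sq (X i j)).symm
        rw [h5]; ring
    have hveq : v = (n:ℝ)⁻¹ * (∑ i, X i j * ε i) - βh j := by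
      rw [hvdef]
      have h1 : ∀ i, y i - ∑ k, X i k * βh k = ε i - ∑ l, X i l * (βh l - β₀ l) := by
        intro i
        have h2 : ∑ l, X i l * (βh l - β₀ l) = ∑ l, X i l * βh l - ∑ l, X i l * β₀ l := by
          rw [← Finset.sum_sub_distrib]; exact Finset.sum_congr rfl fun l _ => by ring
        rw [h2, hy i]; ring
      simp only [h1]
      rw [show (∑ i, X i j * (ε i - ∑ l, X i l * (βh l - β₀ l)))
          = (∑ i, X i j * ε i) - ∑ i, X i j * (∑ l, X i l * (βh l - β₀ l)) by
        rw [← Finset.sum_sub_distrib]; exact Finset.sum_congr rfl fun i _ => by ring]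
      rw [hcross]
      field_simp
    -- |noise at j| = lam
    have hUlam : |(n:ℝ)⁻¹ * ∑ i, X i j * ε i| = lam := by
      rw [hveq] at hE1
      have h1 : |βh j| * ((n:ℝ)⁻¹ * ∑ i, X i j * ε i) = βh j * lam := by
        linear_combination hE1
      have h2 := congrArg abs h1
      rw [abs_mul (|βh j|) ((n:ℝ)⁻¹ * ∑ i, X i j * ε i), abs_mul (βh j) lam,
        abs_abs, abs_of_pos hlam0] at h2
      exact mul_left_cancel₀ (ne_of_gt ht0) h2
    -- c ≤ 1
    have hc1 : c ≤ 1 := by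
      have hl0e : (l0norm (fun l => if l = j then (1:ℝ) else 0) : ℝ) < M := by
        have he : l0norm (fun l => if l = j then (1:ℝ) else 0) = 1 := by
          unfold l0norm
          have hfil : (Finset.univ.filter fun l => (if l = j then (1:ℝ) else 0) ≠ 0)
              = {j} := by
            ext l
            simp only [Finset.mem_filter, Finset.mem_univ, true_and, Finset.mem_singleton]
            by_cases h : l = j <;> simp [h]
          rw [hfil, Finset.card_singleton]
        rw [he]
        push_cast
        have h1 : (1:ℝ) ≤ (l0norm βh : ℝ) := by
          have h2 : 0 < l0norm βh := Finset.card_pos.2 ⟨j, by simp [hbj]⟩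
          exact_mod_cast h2
        linarith only [h1, hmem]
      have hse := hSE (fun l => if l = j then (1:ℝ) else 0) hl0e
      have he1 : (∑ l, (if l = j then (1:ℝ) else 0)^2) = 1 := by
        have hterm : ∀ l, ((if l = j then (1:ℝ) else 0))^2 = if l = j then (1:ℝ) else 0 :=
          fun l => by by_cases h : l = j <;> simp [h]
        simp only [hterm]
        simp
      have he2 : ∀ i, (∑ k, X i k * (if k = j then (1:ℝ) else 0)) = X i j := by
        intro i
        rw [Finset.sum_eq_single j (fun k _ hkj => by simp [hkj])
          (fun h => absurd (Finset.mem_univ j) h)]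
        simp
      rw [he1, Real.sqrt_one, mul_one] at hse
      simp only [he2] at hse
      rw [hcols j, inv_mul_cancel₀ (ne_of_gt (Real.sqrt_pos.2 hnR))] at hse
      exact hse
    -- final contradiction : lam = |noise| ≤ w < c*lam ≤ lam
    have hfin := hnoise j
    rw [hUlam] at hfin
    nlinarith only [hfin, hwclam, hc1, hlam0]

  · -- Case 1: no edge coordinates
    push_neg at hedge
    have hno : ∀ j, βh j ≠ 0 → lam ≤ |βh j| := fun j hj => hedge j hj
    -- the master aggregate inequality
    have hQ : hardObj y X lam βh ≤ hardObj y X lam β₀ := hmin β₀ (by rw [← hSdef]; exact hs)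
    have hdiff := obj_diff hn0 y X lam β₀ βh
    simp only [hyε] at hdiff
    set G : Fin p → ℝ := fun j =>
      c^2/2 * (βh j - β₀ j)^2 + hardPenalty lam |βh j| - hardPenalty lam |β₀ j|
        - (βh j - β₀ j) * ((n:ℝ)⁻¹ * ∑ i, X i j * ε i) with hGdef
    have hGval : ∀ j, G j =
      c^2/2 * (βh j - β₀ j)^2 + hardPenalty lam |βh j| - hardPenalty lam |β₀ j|
        - (βh j - β₀ j) * ((n:ℝ)⁻¹ * ∑ i, X i j * ε i) := fun j => rfl
    have hagg : ∑ j, G j ≤ 0 := by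
      have hl0δ : (l0norm (fun k => βh k - β₀ k) : ℝ) < M := by
        have h1 : (l0norm (fun k => βh k - β₀ k) : ℝ) ≤ (l0norm βh : ℝ) + (l0norm β₀ : ℝ) := by
          exact_mod_cast l0_sub_le βh β₀
        rw [← hSdef] at h1
        linarith only [h1, hmem, hs]
      have hse := se_sq X hSE (fun k => βh k - β₀ k) hl0δ hc.le
      have hswap : (∑ i, ε i * (∑ k, X i k * (βh k - β₀ k)))
          = ∑ k, (βh k - β₀ k) * (∑ i, X i k * ε i) := by
        simp_rw [Finset.mul_sum]
        rw [Finset.sum_comm]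
        refine Finset.sum_congr rfl fun k _ => Finset.sum_congr rfl fun i _ => by ring
      have hsplit : ∑ j, G j = c^2/2 * (∑ j, (βh j - β₀ j)^2)
          + (∑ j, (hardPenalty lam |βh j| - hardPenalty lam |β₀ j|))
          - ∑ j, (βh j - β₀ j) * ((n:ℝ)⁻¹ * ∑ i, X i j * ε i) := by
        rw [Finset.mul_sum, ← Finset.sum_add_distrib, ← Finset.sum_sub_distrib]
        exact Finset.sum_congr rfl fun j _ => by rw [hGval j]; ring
      have hnoiseterm : (n:ℝ)⁻¹ * (∑ i, ε i * (∑ k, X i k * (βh k - β₀ k)))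
          = ∑ j, (βh j - β₀ j) * ((n:ℝ)⁻¹ * ∑ i, X i j * ε i) := by
        rw [hswap, Finset.mul_sum]
        exact Finset.sum_congr rfl fun k _ => by ring
      have hT2 : c^2/2 * (∑ j, (βh j - β₀ j)^2)
          ≤ (2*(n:ℝ))⁻¹ * ∑ i, (∑ k, X i k * (βh k - β₀ k))^2 := by
        have h2n : (2*(n:ℝ))⁻¹ * (∑ i, (∑ k, X i k * (βh k - β₀ k))^2)
            = ((n:ℝ)⁻¹ * ∑ i, (∑ k, X i k * (βh k - β₀ k))^2)/2 := by
          rw [mul_inv]; ring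
        rw [h2n]
        linarith only [hse]
      rw [hsplit]
      linarith only [hdiff, hQ, hT2, hnoiseterm]
    clear hdiff hQ
    -- constant K and basic facts
    set K : ℝ := w^2/(2*c^2) with hKdef
    have hK2 : 2*c^2*K = w^2 := by rw [hKdef]; field_simp
    have hK0 : 0 ≤ K := by rw [hKdef]; positivity
    clear_value K
    have hclam2 : (2*S+1)*w^2 < c^2*lam^2 := by
      have h := mul_self_lt_mul_self (by nlinarith only [hσ1, hw0] : (0:ℝ) ≤ σ*w) hclam
      nlinarith only [h, hσsq]
    have hpβ₀ : ∀ j, β₀ j ≠ 0 → hardPenalty lam |β₀ j| = lam^2/2 :=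
      fun j hj => hp_big (le_trans hblam.le (hb₀ j hj))
    have hpβh : ∀ j, βh j ≠ 0 → hardPenalty lam |βh j| = lam^2/2 :=
      fun j hj => hp_big (hno j hj)
    -- margin for false negatives
    have hFN : ∀ j, β₀ j ≠ 0 → βh j = 0 → S * K < G j := by
      intro j hj hbh
      have hS1 : (1:ℝ) ≤ S := by
        rw [hSdef]
        have h : 0 < l0norm β₀ := Finset.card_pos.2 ⟨j, by simp [hj]⟩
        exact_mod_cast h
      have hd : b₀ ≤ |β₀ j| := hb₀ j hj
      rw [hGval j, hbh, abs_zero, hp_zero hlam0.le, hpβ₀ j hj]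
      have h1 : -( |β₀ j| * w) ≤ β₀ j * ((n:ℝ)⁻¹ * ∑ i, X i j * ε i) := by
        have h2 : |β₀ j * ((n:ℝ)⁻¹ * ∑ i, X i j * ε i)| ≤ |β₀ j| * w := by
          rw [abs_mul]; exact mul_le_mul_of_nonneg_left (hnoise j) (abs_nonneg _)
        linarith only [h2, neg_abs_le (β₀ j * ((n:ℝ)⁻¹ * ∑ i, X i j * ε i))]
      have hsqb : (β₀ j)^2 = |β₀ j|^2 := (sq_abs _).symm
      have hmono : c^2/2 * b₀^2 - w*b₀ ≤ c^2/2*|β₀ j|^2 - w*|β₀ j| := by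
        have hf : 0 ≤ c^2/2*(|β₀ j|+b₀) - w := by
          nlinarith only [hb4, hw0, hσ1, mul_nonneg (sq_nonneg c) (sub_nonneg.2 hd),
            mul_nonneg (mul_nonneg (by linarith only [hσ1] : (0:ℝ) ≤ σ - 1) hw0.le)
              (by norm_num : (0:ℝ) ≤ 4)]
        nlinarith only [mul_nonneg (sub_nonneg.2 hd) hf]
      have hcore : S * K < c^2/2 * b₀^2 - w*b₀ - lam^2/2 := by
        have e2 : lam^2/2 < c^2*b₀^2/4 := by linarith only [hlam2]
        have e3 : c^2*(c^2*b₀^2/4 - w*b₀) > c^2*(b₀*((σ-1)*w)) := by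
          apply mul_lt_mul_of_pos_left _ (by positivity)
          have h9 : c^2*b₀/4 - w > (σ-1)*w := by nlinarith only [hb4, hσ1, hw0]
          nlinarith only [h9, hb₀pos, mul_pos hb₀pos hw0]
        have e4 : c^2*(b₀*((σ-1)*w)) ≥ 4*(σ*w)*((σ-1)*w) := by
          have hσw : 0 ≤ (σ-1)*w := by nlinarith only [hσ1, hw0]
          nlinarith only [hb4, hσw, mul_nonneg hσw
            (by linarith only [hb4] : (0:ℝ) ≤ c^2*b₀ - 4*(σ*w))]
        have e5 : 4*(σ*w)*((σ-1)*w) = 4*w^2*(σ^2 - σ) := by ring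
        have e6 : σ^2 - σ ≥ S := by rw [hσsq]; linarith only [hσS]
        have e7 : c^2*(c^2*b₀^2/4 - w*b₀) > 4*w^2*S := by
          calc c^2*(c^2*b₀^2/4 - w*b₀) > c^2*(b₀*((σ-1)*w)) := e3
            _ ≥ 4*(σ*w)*((σ-1)*w) := e4
            _ = 4*w^2*(σ^2-σ) := e5
            _ ≥ 4*w^2*S := by nlinarith only [e6, hw0, sq_nonneg w]
        have hSK : 2*c^2*(S*K) = S*w^2 := by linear_combination S * hK2
        nlinarith only [e7, e2, hSK, hK2, hS1, hw0, sq_nonneg w, mul_pos hc hc]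
      nlinarith only [hmono, hcore, h1, hsqb]
    -- margin for false positives
    have hFP : ∀ j, β₀ j = 0 → βh j ≠ 0 → S * K < G j := by
      intro j hj hbh
      rw [hGval j, hj, hpβh j hbh, abs_zero, hp_zero hlam0.le]
      simp only [sub_zero]
      have hUj : βh j * ((n:ℝ)⁻¹ * ∑ i, X i j * ε i) ≤ |βh j| * w := by
        have h2 : |βh j * ((n:ℝ)⁻¹ * ∑ i, X i j * ε i)| ≤ |βh j| * w := by
          rw [abs_mul]; exact mul_le_mul_of_nonneg_left (hnoise j) (abs_nonneg _)
        linarith only [h2, le_abs_self (βh j * ((n:ℝ)⁻¹ * ∑ i, X i j * ε i))]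
      have hsqb : (βh j)^2 = |βh j|^2 := (sq_abs _).symm
      have hSK : 2*c^2*(S*K) = S*w^2 := by linear_combination S * hK2
      have h4 : c^4*(βh j)^2 = c^4*|βh j|^2 := by rw [sq_abs]
      nlinarith only [hUj, h4, sq_nonneg (c^2*|βh j| - w), hclam2, hSK, hK2,
        mul_pos hc hc, abs_nonneg (βh j), hw0, mul_nonneg hS0 (sq_nonneg w)]
    -- lower bound for all coordinates
    have hrest : ∀ j, (if β₀ j ≠ 0 then -K else 0) ≤ G j := by
      intro j
      by_cases hj : β₀ j = 0
      · rw [if_neg (by simp [hj])]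
        by_cases hbh : βh j = 0
        · have hz : G j = 0 := by
            rw [hGval j, hj, hbh, abs_zero, hp_zero hlam0.le]
            ring
          linarith only [hz]
        · have h := hFP j hj hbh
          nlinarith only [h, hK0, hS0, mul_nonneg hS0 hK0]
      · rw [if_pos hj]
        by_cases hbh : βh j = 0
        · have h := hFN j hj hbh
          nlinarith only [h, hK0, hS0, mul_nonneg hS0 hK0]
        · rw [hGval j, hpβh j hbh, hpβ₀ j hj]
          have hUj : (βh j - β₀ j) * ((n:ℝ)⁻¹ * ∑ i, X i j * ε i) ≤ |βh j - β₀ j| * w := by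
            have h2 : |(βh j - β₀ j) * ((n:ℝ)⁻¹ * ∑ i, X i j * ε i)| ≤ |βh j - β₀ j| * w := by
              rw [abs_mul]; exact mul_le_mul_of_nonneg_left (hnoise j) (abs_nonneg _)
            linarith only [h2, le_abs_self ((βh j - β₀ j) * ((n:ℝ)⁻¹ * ∑ i, X i j * ε i))]
          have h4 : c^4*(βh j - β₀ j)^2 = c^4*|βh j - β₀ j|^2 := by rw [sq_abs]
          nlinarith only [hUj, h4, sq_nonneg (c^2*|βh j - β₀ j| - w), hK2, mul_pos hc hc]
    -- no bad coordinate
    have hgood : ∀ j₀, ¬((β₀ j₀ ≠ 0 ∧ βh j₀ = 0) ∨ (β₀ j₀ = 0 ∧ βh j₀ ≠ 0)) := by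
      intro j₀ hbad
      have hj₀marg : S * K < G j₀ := by
        rcases hbad with ⟨h1, h2⟩ | ⟨h1, h2⟩
        · exact hFN j₀ h1 h2
        · exact hFP j₀ h1 h2
      have hcard : (((Finset.univ.erase j₀).filter fun j => β₀ j ≠ 0).card : ℝ) ≤ S := by
        rw [hSdef]
        have h : ((Finset.univ.erase j₀).filter fun j => β₀ j ≠ 0).card ≤ l0norm β₀ := by
          unfold l0norm
          exact Finset.card_le_card
            (Finset.filter_subset_filter _ (Finset.erase_subset _ _))
        exact_mod_cast h
      have hsum1 : -(S*K) ≤ ∑ j ∈ Finset.univ.erase j₀, G j := by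
        have h1 : ∑ j ∈ Finset.univ.erase j₀, (if β₀ j ≠ 0 then -K else 0)
            ≤ ∑ j ∈ Finset.univ.erase j₀, G j :=
          Finset.sum_le_sum fun j _ => hrest j
        have h2 : ∑ j ∈ Finset.univ.erase j₀, (if β₀ j ≠ 0 then -K else 0)
            = (((Finset.univ.erase j₀).filter fun j => β₀ j ≠ 0).card : ℝ) * (-K) := by
          rw [Finset.sum_ite, Finset.sum_const, Finset.sum_const_zero, add_zero,
            nsmul_eq_mul]
        nlinarith only [h1, h2, hcard, hK0]
      have hsum2 : ∑ j, G j = G j₀ + ∑ j ∈ Finset.univ.erase j₀, G j :=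
        (Finset.add_sum_erase _ G (Finset.mem_univ j₀)).symm
      linarith only [hagg, hj₀marg, hsum1, hsum2]
    constructor
    · intro j hj
      by_cases hb : βh j = 0
      · exact absurd (Or.inl ⟨hj, hb⟩) (hgood j)
      · exact hno j hb
    · intro j hj
      by_contra hb
      exact hgood j (Or.inr ⟨hj, hb⟩)

end Aux

set_option maxHeartbeats 4000000 in
/-- Estimation loss bounds (part (c) of Theorem 1 of the paper, stated
deterministically on the noise events `E` and `E'`):
`‖β̂ − β₀‖_q ≤ 2c⁻²c₂' s^{1/q}√((log n)/n)` for `q ∈ [1,2]`, and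
`‖β̂ − β₀‖_∞ ≤ 2c⁻²c₂'√(s(log n)/n)`. -/
theorem thresholded_regression_estimation_bounds
    (n p : ℕ) (hn : 2 ≤ n) (hp : 1 ≤ p) (hp' : 2 ≤ max n p)
    (X : Matrix (Fin n) (Fin p) ℝ) (hcols : ∀ j, ∑ i, (X i j) ^ 2 = (n : ℝ))
    (β₀ : Fin p → ℝ) (ε y : Fin n → ℝ)
    (hy : ∀ i, y i = (∑ k, X i k * β₀ k) + ε i)
    (c c₂ M b₀ lam : ℝ) (hc : 0 < c) (hc₂ : 0 < c₂)
    -- (i) sparse-eigenvalue (robust spark) condition with bound c for sparsity level M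
    (hSE : ∀ δ : Fin p → ℝ, (l0norm δ : ℝ) < M →
      c * Real.sqrt (∑ j, (δ j) ^ 2) ≤
        (Real.sqrt n)⁻¹ * Real.sqrt (∑ i, (∑ k, X i k * δ k) ^ 2))
    -- (ii) s = ‖β₀‖₀ < M/2
    (hs : (l0norm β₀ : ℝ) < M / 2)
    -- (iii) noise bound ‖n⁻¹Xᵀε‖_∞ ≤ c₂√((log p̃)/n)
    (hnoise : ∀ j, |(n : ℝ)⁻¹ * ∑ i, X i j * ε i| ≤
      c₂ * Real.sqrt (Real.log (max n p) / n))
    -- b₀ = min nonzero signal strength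
    (hb₀ : ∀ j, β₀ j ≠ 0 → b₀ ≤ |β₀ j|)
    -- (iv) minimum signal strength condition
    (hb₀_large : b₀ > max (4 / c) 1 * c⁻¹ * c₂ *
      Real.sqrt ((2 * (l0norm β₀ : ℝ) + 1) * Real.log (max n p) / n))
    -- (v) regularization parameter range
    (hlam_low : c⁻¹ * c₂ *
      Real.sqrt ((2 * (l0norm β₀ : ℝ) + 1) * Real.log (max n p) / n) < lam)
    (hlam_high : lam < b₀ * min 1 (Real.sqrt (c ^ 2 / 2)))
    -- noise bound on the oracle submatrix: ‖n⁻¹X₀ᵀε‖_∞ ≤ c₂′√((log n)/n)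
    (c₂' : ℝ) (hc₂' : 0 < c₂')
    (hnoise' : ∀ j, β₀ j ≠ 0 → |(n : ℝ)⁻¹ * ∑ i, X i j * ε i| ≤
      c₂' * Real.sqrt (Real.log n / n))
    -- β̂ is a global minimizer of Q over S_{M/2}
    (βhat : Fin p → ℝ) (hmem : (l0norm βhat : ℝ) < M / 2)
    (hmin : ∀ β : Fin p → ℝ, (l0norm β : ℝ) < M / 2 →
      hardObj y X lam βhat ≤ hardObj y X lam β) :
    (∀ q : ℝ, 1 ≤ q → q ≤ 2 →
      (∑ j, |βhat j - β₀ j| ^ q) ^ (1 / q) ≤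
        2 * c⁻¹ ^ 2 * c₂' * (l0norm β₀ : ℝ) ^ (1 / q) * Real.sqrt (Real.log n / n)) ∧
    (∀ j, |βhat j - β₀ j| ≤
      2 * c⁻¹ ^ 2 * c₂' * Real.sqrt ((l0norm β₀ : ℝ) * Real.log n / n)) := by
  have hnR : (0:ℝ) < n := by exact_mod_cast (by omega : 0 < n)
  have hn0 : (n:ℝ) ≠ 0 := ne_of_gt hnR
  have hyε : ∀ i, y i - ∑ k, X i k * β₀ k = ε i := fun i => by rw [hy i]; ring
  have hlogn : (0:ℝ) < Real.log n :=
    Real.log_pos (by exact_mod_cast (by omega : 1 < n))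
  obtain ⟨hsupp1, hsupp2⟩ := main_claim hn hp' X hcols β₀ ε y hy c c₂ M b₀ lam hc hc₂
    hSE hs hnoise hb₀ hb₀_large hlam_low hlam_high (l0norm βhat) βhat rfl hmem hmin
  have hS0 : (0:ℝ) ≤ (l0norm β₀ : ℝ) := Nat.cast_nonneg _
  have hlam0 : 0 < lam := lt_of_le_of_lt (by positivity) hlam_low
  have hb₀pos : 0 < b₀ := by
    refine lt_trans ?_ hb₀_large
    have hmnp : (1:ℝ) < max (n:ℝ) (p:ℝ) := by
      have h2 : ((2:ℕ):ℝ) ≤ ((max n p : ℕ):ℝ) := Nat.cast_le.2 hp'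
      push_cast at h2
      linarith
    have hlogp : (0:ℝ) < Real.log (max (n:ℝ) (p:ℝ)) := Real.log_pos hmnp
    have h1 : (0:ℝ) < c⁻¹ * c₂ *
        Real.sqrt ((2 * (l0norm β₀ : ℝ) + 1) * Real.log (max n p) / n) := by positivity
    have h2 : (1:ℝ) ≤ max (4/c) 1 := le_max_right _ _
    nlinarith only [h1, h2]
  have hblam : lam < b₀ := by
    have h := mul_le_mul_of_nonneg_left (min_le_left 1 (Real.sqrt (c^2/2))) hb₀pos.le
    rw [mul_one] at h
    linarith only [h, hlam_high]
  -- support and penalty equality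
  have hδ0 : ∀ jj, β₀ jj = 0 → βhat jj - β₀ jj = 0 :=
    fun jj h => by rw [hsupp2 jj h, h, sub_zero]
  have hPeq : (∑ k, (hardPenalty lam |βhat k| - hardPenalty lam |β₀ k|)) = 0 := by
    apply Finset.sum_eq_zero
    intro k _
    by_cases h : β₀ k = 0
    · rw [hsupp2 k h, h, sub_self]
    · rw [hp_big (hsupp1 k h), hp_big (le_trans hblam.le (hb₀ k h)), sub_self]
  have hQ := hmin β₀ hs
  have hdiff := obj_diff hn0 y X lam β₀ βhat
  simp only [hyε] at hdiff
  rw [hPeq, add_zero] at hdiff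
  have hnoiseterm : (n:ℝ)⁻¹ * (∑ i, ε i * (∑ k, X i k * (βhat k - β₀ k)))
      = ∑ k, (βhat k - β₀ k) * ((n:ℝ)⁻¹ * ∑ i, X i k * ε i) := by
    have hswap : (∑ i, ε i * (∑ k, X i k * (βhat k - β₀ k)))
        = ∑ k, (βhat k - β₀ k) * (∑ i, X i k * ε i) := by
      simp_rw [Finset.mul_sum]
      rw [Finset.sum_comm]
      refine Finset.sum_congr rfl fun k _ => Finset.sum_congr rfl fun i _ => by ring
    rw [hswap, Finset.mul_sum]
    exact Finset.sum_congr rfl fun k _ => by ring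
  have hl0δ : (l0norm (fun k => βhat k - β₀ k) : ℝ) < M := by
    have h1 : (l0norm (fun k => βhat k - β₀ k) : ℝ) ≤ (l0norm βhat : ℝ) + (l0norm β₀ : ℝ) := by
      exact_mod_cast l0_sub_le βhat β₀
    linarith only [h1, hmem, hs]
  have hse := se_sq X hSE (fun k => βhat k - β₀ k) hl0δ hc.le
  have hmaster : c^2/2 * (∑ jj, (βhat jj - β₀ jj)^2)
      ≤ ∑ k, (βhat k - β₀ k) * ((n:ℝ)⁻¹ * ∑ i, X i k * ε i) := by
    have h2n : (2*(n:ℝ))⁻¹ * (∑ i, (∑ k, X i k * (βhat k - β₀ k))^2)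
        = ((n:ℝ)⁻¹ * ∑ i, (∑ k, X i k * (βhat k - β₀ k))^2)/2 := by
      rw [mul_inv]; ring
    linarith only [hQ, hdiff, hse, hnoiseterm, h2n]
  -- restrict the noise sum to the support and bound it
  have hsupp_sum : ∑ k, (βhat k - β₀ k) * ((n:ℝ)⁻¹ * ∑ i, X i k * ε i)
      ≤ c₂' * Real.sqrt (Real.log n / n)
        * ∑ k ∈ Finset.univ.filter (fun k => β₀ k ≠ 0), |βhat k - β₀ k| := by
    rw [← Finset.sum_filter_add_sum_filter_not Finset.univ (fun k => β₀ k ≠ 0)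
      (fun k => (βhat k - β₀ k) * ((n:ℝ)⁻¹ * ∑ i, X i k * ε i))]
    have hz : ∑ k ∈ Finset.univ.filter (fun k => ¬ β₀ k ≠ 0),
        (βhat k - β₀ k) * ((n:ℝ)⁻¹ * ∑ i, X i k * ε i) = 0 := by
      apply Finset.sum_eq_zero
      intro k hk
      rw [hδ0 k (not_not.1 (Finset.mem_filter.1 hk).2), zero_mul]
    rw [hz, add_zero, Finset.mul_sum]
    apply Finset.sum_le_sum
    intro k hk
    have hk' : β₀ k ≠ 0 := (Finset.mem_filter.1 hk).2
    have h1 : |(βhat k - β₀ k) * ((n:ℝ)⁻¹ * ∑ i, X i k * ε i)|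
        ≤ |βhat k - β₀ k| * (c₂' * Real.sqrt (Real.log n / n)) := by
      rw [abs_mul]
      exact mul_le_mul_of_nonneg_left (hnoise' k hk') (abs_nonneg _)
    calc (βhat k - β₀ k) * ((n:ℝ)⁻¹ * ∑ i, X i k * ε i)
        ≤ |(βhat k - β₀ k) * ((n:ℝ)⁻¹ * ∑ i, X i k * ε i)| := le_abs_self _
      _ ≤ |βhat k - β₀ k| * (c₂' * Real.sqrt (Real.log n / n)) := h1
      _ = c₂' * Real.sqrt (Real.log n / n) * |βhat k - β₀ k| := mul_comm _ _
  -- Cauchy-Schwarz on the support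
  have hcardS : ((Finset.univ.filter (fun k => β₀ k ≠ 0)).card : ℝ) = (l0norm β₀ : ℝ) := rfl
  have hCS : (∑ k ∈ Finset.univ.filter (fun k => β₀ k ≠ 0), |βhat k - β₀ k|)^2
      ≤ (∑ jj, (βhat jj - β₀ jj)^2) * (l0norm β₀ : ℝ) := by
    have h1 := Finset.sum_mul_sq_le_sq_mul_sq (Finset.univ.filter (fun k => β₀ k ≠ 0))
      (fun k => |βhat k - β₀ k|) (fun _ => 1)
    simp only [mul_one, one_pow] at h1
    rw [Finset.sum_const, nsmul_eq_mul, mul_one] at h1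
    have h2 : ∑ k ∈ Finset.univ.filter (fun k => β₀ k ≠ 0), |βhat k - β₀ k|^2
        ≤ ∑ jj, (βhat jj - β₀ jj)^2 := by
      rw [Finset.sum_congr rfl fun k _ => sq_abs (βhat k - β₀ k)]
      exact Finset.sum_le_sum_of_subset_of_nonneg (Finset.subset_univ _)
        (fun _ _ _ => sq_nonneg _)
    rw [hcardS] at h1
    nlinarith only [h1, h2, hS0, mul_nonneg (sub_nonneg.2 h2) hS0]
  have hDnn : (0:ℝ) ≤ ∑ jj, (βhat jj - β₀ jj)^2 := Finset.sum_nonneg fun _ _ => sq_nonneg _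
  have hsum_le : ∑ k ∈ Finset.univ.filter (fun k => β₀ k ≠ 0), |βhat k - β₀ k|
      ≤ Real.sqrt ((∑ jj, (βhat jj - β₀ jj)^2) * (l0norm β₀ : ℝ)) := by
    rw [← Real.sqrt_sq (Finset.sum_nonneg fun _ _ => abs_nonneg _)]
    exact Real.sqrt_le_sqrt hCS
  have hw'0 : (0:ℝ) ≤ c₂' * Real.sqrt (Real.log n / n) := by positivity
  have hmaster2 : c^2/2 * (∑ jj, (βhat jj - β₀ jj)^2)
      ≤ c₂' * Real.sqrt (Real.log n / n)
        * (Real.sqrt (∑ jj, (βhat jj - β₀ jj)^2) * Real.sqrt (l0norm β₀ : ℝ)) := by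
    have h4 : Real.sqrt ((∑ jj, (βhat jj - β₀ jj)^2) * (l0norm β₀:ℝ))
        = Real.sqrt (∑ jj, (βhat jj - β₀ jj)^2) * Real.sqrt (l0norm β₀ : ℝ) :=
      Real.sqrt_mul hDnn _
    calc c^2/2 * (∑ jj, (βhat jj - β₀ jj)^2)
        ≤ ∑ k, (βhat k - β₀ k) * ((n:ℝ)⁻¹ * ∑ i, X i k * ε i) := hmaster
      _ ≤ c₂' * Real.sqrt (Real.log n / n)
          * ∑ k ∈ Finset.univ.filter (fun k => β₀ k ≠ 0), |βhat k - β₀ k| := hsupp_sum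
      _ ≤ c₂' * Real.sqrt (Real.log n / n)
          * Real.sqrt ((∑ jj, (βhat jj - β₀ jj)^2) * (l0norm β₀:ℝ)) :=
        mul_le_mul_of_nonneg_left hsum_le hw'0
      _ = _ := by rw [h4]
  -- the key ℓ₂ bound
  have hkey : Real.sqrt (∑ jj, (βhat jj - β₀ jj)^2)
      ≤ 2 * c⁻¹^2 * c₂' * Real.sqrt (Real.log n / n) * Real.sqrt (l0norm β₀ : ℝ) := by
    rcases eq_or_lt_of_le hDnn with hD0 | hD0
    · rw [← hD0, Real.sqrt_zero]
      positivity
    · have hx0 : 0 < Real.sqrt (∑ jj, (βhat jj - β₀ jj)^2) := Real.sqrt_pos.2 hD0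
      have hxx : Real.sqrt (∑ jj, (βhat jj - β₀ jj)^2)
          * Real.sqrt (∑ jj, (βhat jj - β₀ jj)^2) = ∑ jj, (βhat jj - β₀ jj)^2 :=
        Real.mul_self_sqrt hDnn
      have h6 : c^2/2 * Real.sqrt (∑ jj, (βhat jj - β₀ jj)^2)
          ≤ c₂' * Real.sqrt (Real.log n / n) * Real.sqrt (l0norm β₀ : ℝ) := by
        apply le_of_mul_le_mul_right _ hx0
        calc c^2/2 * Real.sqrt (∑ jj, (βhat jj - β₀ jj)^2)
              * Real.sqrt (∑ jj, (βhat jj - β₀ jj)^2)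
            = c^2/2 * (∑ jj, (βhat jj - β₀ jj)^2) := by rw [mul_assoc, hxx]
          _ ≤ c₂' * Real.sqrt (Real.log n / n)
              * (Real.sqrt (∑ jj, (βhat jj - β₀ jj)^2) * Real.sqrt (l0norm β₀ : ℝ)) :=
            hmaster2
          _ = c₂' * Real.sqrt (Real.log n / n) * Real.sqrt (l0norm β₀ : ℝ)
              * Real.sqrt (∑ jj, (βhat jj - β₀ jj)^2) := by ring
      have h7 : 2*c⁻¹^2*(c^2/2* Real.sqrt (∑ jj, (βhat jj - β₀ jj)^2))
          = Real.sqrt (∑ jj, (βhat jj - β₀ jj)^2) := by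
        field_simp
      calc Real.sqrt (∑ jj, (βhat jj - β₀ jj)^2)
          = 2*c⁻¹^2*(c^2/2* Real.sqrt (∑ jj, (βhat jj - β₀ jj)^2)) := h7.symm
        _ ≤ 2*c⁻¹^2*(c₂' * Real.sqrt (Real.log n / n) * Real.sqrt (l0norm β₀ : ℝ)) :=
          mul_le_mul_of_nonneg_left h6 (by positivity)
        _ = 2 * c⁻¹^2 * c₂' * Real.sqrt (Real.log n / n) * Real.sqrt (l0norm β₀ : ℝ) := by
          ring
  constructor
  · -- ℓ_q bounds
    intro q hq1 hq2
    have hq0 : (0:ℝ) < q := lt_of_lt_of_le one_pos hq1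
    by_cases hScard : l0norm β₀ = 0
    · -- no signal at all : βhat = β₀
      have hz : ∀ jj, βhat jj - β₀ jj = 0 := by
        intro jj
        apply hδ0
        by_contra h
        have : jj ∈ Finset.univ.filter (fun k => β₀ k ≠ 0) := by simp [h]
        have hcard : 0 < l0norm β₀ := Finset.card_pos.2 ⟨jj, this⟩
        omega
      have hzz : (∑ j, |βhat j - β₀ j| ^ q) = 0 := by
        apply Finset.sum_eq_zero
        intro j _
        rw [hz j, abs_zero, Real.zero_rpow (ne_of_gt hq0)]
      rw [hzz, Real.zero_rpow (by positivity : (1:ℝ)/q ≠ 0)]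
      positivity
    · have hSpos : (0:ℝ) < (l0norm β₀ : ℝ) := by
        exact_mod_cast Nat.pos_of_ne_zero hScard
      have hSne : (l0norm β₀ : ℝ) ≠ 0 := ne_of_gt hSpos
      have hp2q : (1:ℝ) ≤ 2/q := by rw [le_div_iff₀ hq0]; linarith
      have hwsum : ∑ _k ∈ Finset.univ.filter (fun k => β₀ k ≠ 0),
          ((l0norm β₀ : ℝ))⁻¹ = 1 := by
        rw [Finset.sum_const, nsmul_eq_mul, hcardS]
        field_simp
      have hpm := Real.arith_mean_le_rpow_mean (Finset.univ.filter (fun k => β₀ k ≠ 0))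
        (fun _ => ((l0norm β₀ : ℝ))⁻¹) (fun k => |βhat k - β₀ k| ^ q)
        (fun i _ => by positivity) hwsum
        (fun i _ => Real.rpow_nonneg (abs_nonneg _) q) hp2q
      have hz2q : ∀ k : Fin p, ((|βhat k - β₀ k| ^ q) ^ ((2:ℝ)/q)) = (βhat k - β₀ k)^2 := by
        intro k
        rw [← Real.rpow_mul (abs_nonneg _) q (2/q),
          show q*(2/q) = (2:ℝ) by field_simp, Real.rpow_two, sq_abs]
      simp only [hz2q] at hpm
      rw [one_div_div, ← Finset.mul_sum, ← Finset.mul_sum] at hpm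
      -- hpm : S⁻¹ * ∑_{supp} |δ|^q ≤ (S⁻¹ * ∑_{supp} δ²)^(q/2)
      have hzfull : ∑ j, |βhat j - β₀ j|^q
          = ∑ k ∈ Finset.univ.filter (fun k => β₀ k ≠ 0), |βhat k - β₀ k|^q := by
        rw [← Finset.sum_filter_add_sum_filter_not Finset.univ (fun k => β₀ k ≠ 0)
          (fun k => |βhat k - β₀ k|^q)]
        have hzero : ∑ k ∈ Finset.univ.filter (fun k => ¬ β₀ k ≠ 0),
            |βhat k - β₀ k|^q = 0 := by
          apply Finset.sum_eq_zero
          intro k hk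
          rw [hδ0 k (not_not.1 (Finset.mem_filter.1 hk).2), abs_zero,
            Real.zero_rpow (ne_of_gt hq0)]
        rw [hzero, add_zero]
      have hDS : ∑ k ∈ Finset.univ.filter (fun k => β₀ k ≠ 0), (βhat k - β₀ k)^2
          ≤ ∑ jj, (βhat jj - β₀ jj)^2 :=
        Finset.sum_le_sum_of_subset_of_nonneg (Finset.subset_univ _)
          (fun _ _ _ => sq_nonneg _)
      have hA0 : (0:ℝ) ≤ 2 * c⁻¹^2 * c₂' * Real.sqrt (Real.log n / n) := by positivity
      have hDle : ∑ jj, (βhat jj - β₀ jj)^2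
          ≤ (2 * c⁻¹^2 * c₂' * Real.sqrt (Real.log n / n))^2 * (l0norm β₀ : ℝ) := by
        have h8 := pow_le_pow_left₀ (Real.sqrt_nonneg _) hkey 2
        rw [Real.sq_sqrt hDnn, mul_pow, Real.sq_sqrt hS0] at h8
        exact h8
      -- combine : ∑_{supp} |δ|^q ≤ S * (A²)^(q/2) = S * A^q
      have hZq : ∑ k ∈ Finset.univ.filter (fun k => β₀ k ≠ 0), |βhat k - β₀ k|^q
          ≤ (l0norm β₀ : ℝ) * (2 * c⁻¹^2 * c₂' * Real.sqrt (Real.log n / n))^q := by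
        have hstep1 : ((l0norm β₀ : ℝ))⁻¹ * ∑ k ∈ Finset.univ.filter (fun k => β₀ k ≠ 0),
            (βhat k - β₀ k)^2 ≤ ((2 * c⁻¹^2 * c₂' * Real.sqrt (Real.log n / n))^2 :ℝ) := by
          have h9 : ((l0norm β₀ : ℝ))⁻¹ * ((2 * c⁻¹^2 * c₂' * Real.sqrt (Real.log n / n))^2
              * (l0norm β₀ : ℝ)) = (2 * c⁻¹^2 * c₂' * Real.sqrt (Real.log n / n))^2 := by
            field_simp
          calc ((l0norm β₀ : ℝ))⁻¹ * ∑ k ∈ Finset.univ.filter (fun k => β₀ k ≠ 0),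
              (βhat k - β₀ k)^2
              ≤ ((l0norm β₀ : ℝ))⁻¹ * ((2 * c⁻¹^2 * c₂' * Real.sqrt (Real.log n / n))^2
                * (l0norm β₀ : ℝ)) :=
              mul_le_mul_of_nonneg_left (le_trans hDS hDle) (inv_nonneg.2 hS0)
            _ = _ := h9
        have hstep2 : (((l0norm β₀ : ℝ))⁻¹ * ∑ k ∈ Finset.univ.filter (fun k => β₀ k ≠ 0),
            (βhat k - β₀ k)^2)^((q:ℝ)/2)
            ≤ ((2 * c⁻¹^2 * c₂' * Real.sqrt (Real.log n / n))^2)^((q:ℝ)/2) := by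
          refine Real.rpow_le_rpow ?_ hstep1 (by positivity)
          have h10 : (0:ℝ) ≤ ∑ k ∈ Finset.univ.filter (fun k => β₀ k ≠ 0),
              (βhat k - β₀ k)^2 := Finset.sum_nonneg fun k _ => sq_nonneg _
          positivity
        have hstep3 : ((2 * c⁻¹^2 * c₂' * Real.sqrt (Real.log n / n))^2 : ℝ)^((q:ℝ)/2)
            = (2 * c⁻¹^2 * c₂' * Real.sqrt (Real.log n / n))^q := by
          rw [← Real.rpow_natCast (2 * c⁻¹^2 * c₂' * Real.sqrt (Real.log n / n)) 2,
            ← Real.rpow_mul hA0]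
          have h11 : ((2:ℕ):ℝ)*(q/2) = q := by push_cast; ring
          rw [h11]
        rw [hstep3] at hstep2
        have hstep4 := mul_le_mul_of_nonneg_left (le_trans hpm hstep2) hSpos.le
        have hstep5 : (l0norm β₀:ℝ) * (((l0norm β₀:ℝ))⁻¹
            * ∑ k ∈ Finset.univ.filter (fun k => β₀ k ≠ 0), |βhat k - β₀ k|^q)
            = ∑ k ∈ Finset.univ.filter (fun k => β₀ k ≠ 0), |βhat k - β₀ k|^q := by
          field_simp
        rw [hstep5] at hstep4
        exact hstep4
      -- final rpow algebra
      have hsum_nn : (0:ℝ) ≤ ∑ j, |βhat j - β₀ j|^q :=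
        Finset.sum_nonneg fun j _ => Real.rpow_nonneg (abs_nonneg _) q
      have hfin1 : (∑ j, |βhat j - β₀ j|^q)^((1:ℝ)/q)
          ≤ ((l0norm β₀ : ℝ) * (2 * c⁻¹^2 * c₂'
            * Real.sqrt (Real.log n / n))^q)^((1:ℝ)/q) := by
        apply Real.rpow_le_rpow hsum_nn _ (by positivity)
        rw [hzfull]
        exact hZq
      have hfin2 : ((l0norm β₀ : ℝ) * (2 * c⁻¹^2 * c₂'
          * Real.sqrt (Real.log n / n))^q)^((1:ℝ)/q)
          = (l0norm β₀ : ℝ)^((1:ℝ)/q) * (2 * c⁻¹^2 * c₂' * Real.sqrt (Real.log n / n)) := by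
        rw [Real.mul_rpow hS0 (Real.rpow_nonneg hA0 q), ← Real.rpow_mul hA0,
          mul_one_div_cancel (ne_of_gt hq0), Real.rpow_one]
      calc (∑ j, |βhat j - β₀ j|^q)^((1:ℝ)/q)
          ≤ ((l0norm β₀ : ℝ) * (2 * c⁻¹^2 * c₂' * Real.sqrt (Real.log n / n))^q)^((1:ℝ)/q) :=
            hfin1
        _ = (l0norm β₀ : ℝ)^((1:ℝ)/q) * (2 * c⁻¹^2 * c₂' * Real.sqrt (Real.log n / n)) :=
            hfin2
        _ = 2 * c⁻¹ ^ 2 * c₂' * (l0norm β₀ : ℝ) ^ ((1:ℝ)/q) * Real.sqrt (Real.log n / n) := by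
            ring
  · -- ℓ_∞ bound
    intro j
    have h1 : (βhat j - β₀ j)^2 ≤ ∑ jj, (βhat jj - β₀ jj)^2 :=
      Finset.single_le_sum (f := fun jj => (βhat jj - β₀ jj)^2)
        (fun _ _ => sq_nonneg _) (Finset.mem_univ j)
    have h2 : |βhat j - β₀ j| ≤ Real.sqrt (∑ jj, (βhat jj - β₀ jj)^2) := by
      rw [← Real.sqrt_sq_eq_abs]
      exact Real.sqrt_le_sqrt h1
    have h3 : Real.sqrt ((l0norm β₀ : ℝ) * Real.log n / n)
        = Real.sqrt (l0norm β₀ : ℝ) * Real.sqrt (Real.log n / n) := by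
      rw [mul_div_assoc, Real.sqrt_mul hS0]
    calc |βhat j - β₀ j| ≤ Real.sqrt (∑ jj, (βhat jj - β₀ jj)^2) := h2
      _ ≤ 2 * c⁻¹^2 * c₂' * Real.sqrt (Real.log n / n) * Real.sqrt (l0norm β₀ : ℝ) := hkey
      _ = 2 * c⁻¹^2 * c₂' * Real.sqrt ((l0norm β₀ : ℝ) * Real.log n / n) := by
        rw [h3]; ring
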